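/- Let k be a totally real number field with [k : ℚ] ≥ 2, and let b ∈ k be totally positive. Then there exists a nonzero s ∈ k such that exactly one ring homomorphism σ : k → ℝ satisfies σ(s²·b) < 1, and every other ring homomorphism σ' : k → ℝ satisfies σ'(s²·b) > 1. -/
import Mathlib

open scoped Classical

/-- A `ℚ`-submodule of a finite pi type over `ℝ` whose `ℝ`-span is everything is dense. -/
lemma aux_dense_of_span {ι : Type*} [Fintype ι] (V : Submodule ℚ (ι → ℝ))
    (h : Submodule.span ℝ (V : Set (ι → ℝ)) = ⊤) : Dense (V : Set (ι → ℝ)) := by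
  set E := ι → ℝ
  have hsmul : ∀ (r : ℝ), ∀ x ∈ closure (V : Set E), r • x ∈ closure (V : Set E) := by
    intro r x hx
    have hS : IsClosed {r : ℝ | r • x ∈ closure (V : Set E)} := by
      have : Continuous fun r : ℝ => r • x := continuous_id.smul continuous_const
      exact IsClosed.preimage this isClosed_closure
    have hQ : ∀ q : ℚ, (q : ℝ) • x ∈ closure (V : Set E) := by
      intro q
      have hmap : Set.MapsTo (fun y : E => (q : ℝ) • y) (V : Set E) (V : Set E) := by
        intro y hy
        have : (q : ℝ) • y = q • y := by
          rw [← algebraMap_smul ℝ q y]; norm_num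
        simpa [this] using V.smul_mem q hy
      exact hmap.closure (continuous_const_smul _) hx
    have hdense : Dense {r : ℝ | r • x ∈ closure (V : Set E)} := by
      have : Set.range ((↑) : ℚ → ℝ) ⊆ {r : ℝ | r • x ∈ closure (V : Set E)} := by
        rintro _ ⟨q, rfl⟩; exact hQ q
      exact Rat.denseRange_cast.mono this
    have := hdense.closure_eq
    rw [hS.closure_eq] at this
    exact Set.eq_univ_iff_forall.mp this r
  have hW : ∃ W : Submodule ℝ (ι → ℝ), (W : Set E) = closure (V : Set E) := by
    refine ⟨{ carrier := closure (V : Set E)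
              zero_mem' := subset_closure V.zero_mem
              add_mem' := ?_
              smul_mem' := fun r x hx => hsmul r x hx }, rfl⟩
    · intro a b ha hb
      have : Set.MapsTo (fun p : E × E => p.1 + p.2)
          ((V : Set E) ×ˢ (V : Set E)) (V : Set E) := fun p hp => V.add_mem hp.1 hp.2
      have := this.closure (continuous_fst.add continuous_snd)
      have hmem : (a, b) ∈ closure ((V : Set E) ×ˢ (V : Set E)) := by
        rw [closure_prod_eq]; exact ⟨ha, hb⟩
      exact this hmem
  obtain ⟨W, hWeq⟩ := hW
  have hle : Submodule.span ℝ (V : Set (ι → ℝ)) ≤ W := by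
    rw [Submodule.span_le, hWeq]; exact subset_closure
  rw [h] at hle
  have : (W : Set E) = Set.univ := by
    have := Submodule.eq_top_iff'.mpr (fun x => hle (Submodule.mem_top))
    simp [this]
  rw [dense_iff_closure_eq, ← hWeq, this]

/-- Let `k` be a totally real number field with `[k : ℚ] ≥ 2`,
and let `b ∈ k` be totally positive. Then there is a nonzero `s ∈ k` such that
exactly one ring homomorphism `σ : k → ℝ` satisfies `σ(s²·b) < 1`, and every
other one satisfies `σ'(s²·b) > 1`. -/
theorem exists_scaling_one_small_conjugate
    (k : Type*) [Field k] [NumberField k]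
    (htotreal : ∀ σ : k →+* ℂ, ∀ x : k, (σ x).im = 0)
    (hdeg : 2 ≤ Module.finrank ℚ k)
    (b : k) (hb : ∀ σ : k →+* ℝ, 0 < σ b) :
    ∃ s : k, s ≠ 0 ∧ ∃ σ₀ : k →+* ℝ, σ₀ (s ^ 2 * b) < 1 ∧
      ∀ σ : k →+* ℝ, σ ≠ σ₀ → 1 < σ (s ^ 2 * b) := by
  classical
  -- the set of real embeddings
  set ι := (k →+* ℝ)
  -- every complex embedding comes from a real one
  have hsurj : Function.Surjective
      (fun σ : k →+* ℝ => (Complex.ofRealHom.comp σ : k →+* ℂ)) := by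
    intro τ
    refine ⟨{ toFun := fun x => (τ x).re
              map_one' := by simp
              map_mul' := fun x y => by
                simp [Complex.mul_re, htotreal τ x, htotreal τ y]
              map_zero' := by simp
              map_add' := fun x y => by simp }, ?_⟩
    ext x
    apply Complex.ext
    · simp
    · simp [htotreal τ x]
  have hinj : Function.Injective
      (fun σ : k →+* ℝ => (Complex.ofRealHom.comp σ : k →+* ℂ)) := by
    intro σ τ h
    ext x
    have := congrArg (fun f : k →+* ℂ => f x) h
    simpa using Complex.ofReal_injective (by simpa using this)
  have hcard : Fintype.card ι = Module.finrank ℚ k := by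
    rw [← NumberField.Embeddings.card k ℂ]
    exact Fintype.card_of_bijective ⟨hinj, hsurj⟩
  have hcard2 : 2 ≤ Fintype.card ι := hcard ▸ hdeg
  have : Nonempty ι := Fintype.card_pos_iff.mp (by omega)
  obtain ⟨σ₀⟩ := this
  -- the ℚ-linear embedding into ℝ^ι
  let Φ : k →ₗ[ℚ] (ι → ℝ) :=
    { toFun := fun x σ => σ x
      map_add' := fun x y => by ext σ; simp
      map_smul' := fun q x => by
        ext σ
        simp [Rat.smul_def, map_ratCast, Pi.smul_apply, smul_eq_mul] }
  -- its ℝ-span is everything, by linear independence of characters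
  have hspan : Submodule.span ℝ ((LinearMap.range Φ : Submodule ℚ (ι → ℝ)) : Set (ι → ℝ)) = ⊤ := by
    by_contra hne
    obtain ⟨f, hf0, hfbot⟩ := Submodule.exists_dual_map_eq_bot_of_lt_top
      (lt_top_iff_ne_top.mpr hne) inferInstance
    have hvanish : ∀ x : k, f (Φ x) = 0 := by
      intro x
      have : Φ x ∈ Submodule.span ℝ ((LinearMap.range Φ : Submodule ℚ (ι → ℝ)) : Set (ι → ℝ)) :=
        Submodule.subset_span ⟨x, rfl⟩
      have := Submodule.mem_map_of_mem (f := f) this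
      rw [hfbot] at this
      simpa using this
    -- extract coefficients
    set c : ι → ℝ := fun σ => f (fun j => if σ = j then 1 else 0) with hc
    have hsum : ∀ x : k, ∑ σ : ι, c σ * σ x = 0 := by
      intro x
      have := LinearMap.pi_apply_eq_sum_univ f (Φ x)
      rw [hvanish x] at this
      have h2 : ∑ σ : ι, (Φ x) σ • c σ = 0 := this.symm
      rw [← h2]
      exact Finset.sum_congr rfl fun σ _ => by simp [Φ, mul_comm]
    -- linear independence of characters
    have hLI : LinearIndependent ℝ (fun σ : ι => ((σ : k →* ℝ) : k → ℝ)) := by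
      refine (linearIndependent_monoidHom k ℝ).comp (fun σ : ι => (σ : k →* ℝ)) ?_
      intro σ τ h
      ext x
      exact DFunLike.congr_fun (α := k) (congrArg (fun g : k →* ℝ => g) h) x
    have hczero : ∀ σ : ι, c σ = 0 := by
      have := Fintype.linearIndependent_iff.mp hLI c ?_
      · exact this
      · funext x
        simpa [Finset.sum_apply, mul_comm] using hsum x
    -- so f = 0
    apply hf0
    refine LinearMap.ext fun y => ?_
    rw [LinearMap.pi_apply_eq_sum_univ f y]
    simp only [hc] at hczero
    simp [hczero]
  -- density
  have hdense : Dense ((LinearMap.range Φ : Submodule ℚ (ι → ℝ)) : Set (ι → ℝ)) :=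
    aux_dense_of_span _ hspan
  -- the open target set
  set ε : ℝ := (1 + σ₀ b)⁻¹ with hε
  have hεpos : 0 < ε := by
    have := hb σ₀; rw [hε]; positivity
  set M : ι → ℝ := fun σ => 1 + (σ b)⁻¹ with hM
  have hMpos : ∀ σ : ι, 0 < M σ := by
    intro σ; rw [hM]; have := hb σ; positivity
  set U : Set (ι → ℝ) :=
    {y | y σ₀ < ε} ∩ {y | -ε < y σ₀} ∩ ⋂ σ : ι, {y | σ ≠ σ₀ → M σ < y σ} with hU
  have hUopen : IsOpen U := by
    refine (IsOpen.inter (IsOpen.inter ?_ ?_) ?_)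
    · exact isOpen_lt (continuous_apply σ₀) continuous_const
    · exact isOpen_lt continuous_const (continuous_apply σ₀)
    · refine isOpen_iInter_of_finite fun σ => ?_
      by_cases h : σ = σ₀
      · simp [h]
      · have : {y : ι → ℝ | σ ≠ σ₀ → M σ < y σ} = {y | M σ < y σ} := by
          ext y; simp [h]
        rw [this]
        exact isOpen_lt continuous_const (continuous_apply σ)
  have hUne : U.Nonempty := by
    refine ⟨fun σ => if σ = σ₀ then 0 else M σ + 1, ?_, ?_⟩
    · constructor <;> simp [hεpos]
    · simp only [Set.mem_iInter]
      intro σ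
      intro h
      show M σ < if σ = σ₀ then 0 else M σ + 1
      rw [if_neg h]
      linarith
  obtain ⟨v, hvV, hvU⟩ := hdense.exists_mem_open hUopen hUne
  obtain ⟨x, hx⟩ := hvV
  rw [hU] at hvU
  obtain ⟨⟨h1, h2⟩, h3⟩ := hvU
  simp only [Set.mem_iInter, Set.mem_setOf_eq] at h1 h2 h3
  have hval : ∀ σ : ι, v σ = σ x := fun σ => by rw [← hx]; rfl
  have hbig : ∀ σ : ι, σ ≠ σ₀ → M σ < σ x := fun σ h => (hval σ) ▸ h3 σ h
  -- x is nonzero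
  obtain ⟨σ₁, hσ₁⟩ := Fintype.exists_ne_of_one_lt_card (by omega) σ₀
  have hxne : x ≠ 0 := by
    intro h
    have := hbig σ₁ hσ₁
    rw [h, map_zero] at this
    exact absurd this (not_lt.mpr (le_of_lt (hMpos σ₁)))
  refine ⟨x, hxne, σ₀, ?_, ?_⟩
  · -- small at σ₀
    rw [map_mul, map_pow]
    have hx0 : σ₀ x < ε := hval σ₀ ▸ h1
    have hx0' : -ε < σ₀ x := hval σ₀ ▸ h2
    have hsq : (σ₀ x) ^ 2 < ε ^ 2 := sq_lt_sq' hx0' hx0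
    have hb0 := hb σ₀
    have : (σ₀ x) ^ 2 * σ₀ b < ε ^ 2 * σ₀ b := by
      exact mul_lt_mul_of_pos_right hsq hb0
    refine lt_of_lt_of_le this ?_
    rw [hε]
    rw [inv_pow, inv_mul_le_iff₀ (by positivity)]
    nlinarith
  · -- big at other σ
    intro σ hσ
    rw [map_mul, map_pow]
    have hx1 : M σ < σ x := hbig σ hσ
    have hbσ := hb σ
    have hinv : 0 < (σ b)⁻¹ := by positivity
    have hcancel : σ b * (σ b)⁻¹ = 1 := mul_inv_cancel₀ (ne_of_gt hbσ)
    rw [hM] at hx1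
    nlinarith [sq_nonneg (σ x - 1 - (σ b)⁻¹), sq_nonneg (σ x)]
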